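/- arXiv:1605.03934 — 3 statements merged into one kernel-verified Lean document; each statement's English description precedes it below -/
import Mathlib

section
/- Let R be a commutative ring, s, t ∈ R. If an R-module C is an s-contramodule, then the cokernel Δ_t(C) of the map φ : Π_{n≥1} C → Π_{n≥0} C, (cₙ) ↦ (cₙ − t·cₙ₊₁) (with c₀ = 0), is again an s-contramodule. -/
open CategoryTheory Opposite

/-- The map `φ : Π_{n≥1} C → Π_{n≥0} C` sending `(c₁, c₂, …)` to `(cₙ - t·cₙ₊₁)ₙ` (with
`c₀ = 0`); its cokernel is `Δ_t(C)`. Here `c : ℕ → C` represents `(c₁, c₂, …)`. -/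
def phiMap (R : Type) [CommRing R] (C : Type) [AddCommGroup C] [Module R C] (t : R) :
    (ℕ → C) →ₗ[R] (ℕ → C) where
  toFun c := fun n => (if n = 0 then 0 else c (n - 1)) - t • c n
  map_add' c d := by
    funext n
    by_cases h : n = 0 <;> simp [h, smul_add] <;> abel
  map_smul' r c := by
    funext n
    by_cases h : n = 0 <;> simp [h, smul_sub, smul_comm r t]

noncomputable section ContraAux

variable (R : Type) [CommRing R] (s : R)

/-- d : (ℕ→₀R) → (ℕ→₀R), e_n ↦ e_n - s e_{n+1}. -/
def dAux : (ℕ →₀ R) →ₗ[R] (ℕ →₀ R) :=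
  LinearMap.id - s • Finsupp.lmapDomain R R (· + 1)

lemma dAux_apply (a : ℕ →₀ R) (n : ℕ) :
    dAux R s a n = a n - s * (Finsupp.mapDomain (· + 1) a) n := by
  simp [dAux, Finsupp.lmapDomain]

lemma dAux_apply_zero (a : ℕ →₀ R) : dAux R s a 0 = a 0 := by
  rw [dAux_apply, Finsupp.mapDomain_notin_range (f := (· + 1)) a 0 (by simp), mul_zero, sub_zero]

lemma dAux_apply_succ (a : ℕ →₀ R) (n : ℕ) :
    dAux R s a (n + 1) = a (n + 1) - s * a n := by
  rw [dAux_apply, Finsupp.mapDomain_apply (add_left_injective 1) a n]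

lemma dAux_single (n : ℕ) (r : R) :
    dAux R s (Finsupp.single n r) = Finsupp.single n r - s • Finsupp.single (n + 1) r := by
  simp [dAux, Finsupp.lmapDomain, Finsupp.mapDomain_single]

lemma dAux_injective : Function.Injective (dAux R s) := by
  rw [injective_iff_map_eq_zero]
  intro a ha
  have key : ∀ n, a n = 0 := by
    intro n
    induction n with
    | zero =>
        have h := congrArg (fun f : ℕ →₀ R => f 0) ha
        simpa [dAux_apply_zero] using h
    | succ n ih =>
        have h := congrArg (fun f : ℕ →₀ R => f (n + 1)) ha
        simp only [dAux_apply_succ, Finsupp.coe_zero, Pi.zero_apply] at h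
        have : a (n + 1) - s * a n = 0 := h
        rw [ih, mul_zero, sub_zero] at this
        exact this
  ext n; exact key n


/-- The cokernel of `dAux`. -/
abbrev QAux := (ℕ →₀ R) ⧸ LinearMap.range (dAux R s)

/-- The structure map `R → QAux`. -/
def fQ : R →ₗ[R] QAux R s :=
  (LinearMap.range (dAux R s)).mkQ ∘ₗ Finsupp.lsingle 0

lemma mkQ_single_eq (n : ℕ) (r : R) :
    (LinearMap.range (dAux R s)).mkQ (Finsupp.single n r)
      = s • (LinearMap.range (dAux R s)).mkQ (Finsupp.single (n + 1) r) := by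
  rw [← map_smul, Submodule.mkQ_apply, Submodule.mkQ_apply, Submodule.Quotient.eq]
  exact ⟨Finsupp.single n r, (dAux_single R s n r)⟩

lemma smul_s_surjective_Q : Function.Surjective (fun x : QAux R s => s • x) := by
  intro y
  obtain ⟨a, rfl⟩ := Submodule.mkQ_surjective _ y
  refine ⟨(LinearMap.range (dAux R s)).mkQ (Finsupp.mapDomain (· + 1) a), ?_⟩
  show s • (LinearMap.range (dAux R s)).mkQ (Finsupp.mapDomain (· + 1) a)
      = (LinearMap.range (dAux R s)).mkQ a
  rw [← map_smul, Submodule.mkQ_apply, Submodule.mkQ_apply, Submodule.Quotient.eq]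
  refine ⟨-a, ?_⟩
  have : dAux R s a = a - s • Finsupp.mapDomain (· + 1) a := by
    simp [dAux, Finsupp.lmapDomain]
  rw [map_neg, this]
  abel

lemma smul_s_injective_Q : Function.Injective (fun x : QAux R s => s • x) := by
  have key : ∀ x : QAux R s, s • x = 0 → x = 0 := by
    intro x hx
    obtain ⟨a, rfl⟩ := Submodule.mkQ_surjective _ x
    rw [← map_smul, Submodule.mkQ_apply, Submodule.Quotient.mk_eq_zero] at hx
    obtain ⟨b, hb⟩ := hx
    rw [Submodule.mkQ_apply, Submodule.Quotient.mk_eq_zero]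
    set cfun : ℕ → R := fun n => Nat.rec (a 0) (fun n cn => a (n + 1) + s * cn) n with hc
    have hc0 : cfun 0 = a 0 := rfl
    have hcsucc : ∀ n, cfun (n + 1) = a (n + 1) + s * cfun n := fun n => rfl
    have hsb : ∀ n, s * cfun n = b n := by
      intro n
      induction n with
      | zero =>
          have := congrArg (fun f : ℕ →₀ R => f 0) hb
          simp only [dAux_apply_zero] at this
          rw [hc0, this]
          simp
      | succ n ih =>
          have h1 := congrArg (fun f : ℕ →₀ R => f (n + 1)) hb
          simp only [dAux_apply_succ] at h1
          have h3 : (s • a) (n + 1) = s * a (n + 1) := by simp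
          rw [h3] at h1
          rw [hcsucc, mul_add, ih]
          linear_combination -h1
    obtain ⟨N, hNsub⟩ := Finset.exists_nat_subset_range (a.support ∪ b.support)
    have hN : ∀ n, N ≤ n → a n = 0 ∧ b n = 0 := by
      intro n hn
      constructor <;> by_contra h
      · have := hNsub (Finset.mem_union_left _ (Finsupp.mem_support_iff.2 h))
        simp only [Finset.mem_range] at this; omega
      · have := hNsub (Finset.mem_union_right _ (Finsupp.mem_support_iff.2 h))
        simp only [Finset.mem_range] at this; omega
    have hczero : ∀ n, N + 1 ≤ n → cfun n = 0 := by
      intro n hn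
      obtain ⟨m, rfl⟩ := Nat.exists_eq_add_of_le hn
      rw [show N + 1 + m = (N + m) + 1 by ring, hcsucc, (hN _ (by omega)).1, hsb,
        (hN _ (by omega)).2]
      ring
    refine ⟨Finsupp.onFinset (Finset.range (N + 1)) cfun (fun n hne => ?_), ?_⟩
    · simp only [Finset.mem_range]
      by_contra h
      exact hne (hczero n (by omega))
    · ext n
      cases n with
      | zero => rw [dAux_apply_zero]; exact hc0
      | succ n =>
          rw [dAux_apply_succ]
          show cfun (n + 1) - s * cfun n = a (n + 1)
          rw [hcsucc]; ring
  intro x y hxy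
  have := key (x - y) (by rw [smul_sub, sub_eq_zero]; exact hxy)
  rwa [sub_eq_zero] at this

lemma fQ_apply (r : R) : fQ R s r = (LinearMap.range (dAux R s)).mkQ (Finsupp.single 0 r) := rfl

lemma isUnit_algebraMap_pow (k : ℕ) :
    IsUnit (algebraMap R (Module.End R (QAux R s)) (s ^ k)) := by
  rw [map_pow]
  refine IsUnit.pow k ?_
  rw [Module.End.isUnit_iff]
  constructor
  · intro x y hxy
    exact smul_s_injective_Q R s (by simpa [Module.algebraMap_end_apply] using hxy)
  · intro y
    obtain ⟨x, hx⟩ := smul_s_surjective_Q R s y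
    exact ⟨x, by simpa [Module.algebraMap_end_apply] using hx⟩

lemma pow_smul_mkQ (m k : ℕ) (r : R) :
    (s ^ k) • (LinearMap.range (dAux R s)).mkQ (Finsupp.single (m + k) r)
      = (LinearMap.range (dAux R s)).mkQ (Finsupp.single m r) := by
  induction k with
  | zero => simp
  | succ k ih =>
      rw [pow_succ, mul_smul, show m + (k + 1) = (m + k) + 1 from rfl, ← mkQ_single_eq]
      exact ih

instance isLocalizedModule_fQ :
    IsLocalizedModule (Submonoid.powers s) (fQ R s) := by
  constructor
  · rintro ⟨x, k, rfl⟩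
    exact isUnit_algebraMap_pow R s k
  · -- surjectivity
    intro y
    obtain ⟨a, rfl⟩ := Submodule.mkQ_surjective _ y
    induction a using Finsupp.induction with
    | zero =>
        exact ⟨(0, 1), by simp⟩
    | single_add n b a hna hb ih =>
        obtain ⟨⟨r', ⟨N', k', hk'⟩⟩, hr'⟩ := ih
        simp only at hk'
        refine ⟨(s ^ k' * b + s ^ n * r', ⟨s ^ (n + k'), n + k', rfl⟩), ?_⟩
        have h1 : (s ^ (n + k')) • (LinearMap.range (dAux R s)).mkQ (Finsupp.single n b)
            = (LinearMap.range (dAux R s)).mkQ (Finsupp.single 0 (s ^ k' * b)) := by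
          rw [show n + k' = k' + n by ring, pow_add, mul_smul,
            show (Finsupp.single n b : ℕ →₀ R) = Finsupp.single (0 + n) b by rw [zero_add],
            pow_smul_mkQ, ← map_smul, Finsupp.smul_single, smul_eq_mul]
        have h2 : (s ^ k') • (LinearMap.range (dAux R s)).mkQ a
            = (LinearMap.range (dAux R s)).mkQ (Finsupp.single 0 r') := by
          rw [← fQ_apply]
          simpa [Submonoid.smul_def, hk'] using hr'
        have h3 : (s ^ (n + k')) • (LinearMap.range (dAux R s)).mkQ a
            = (LinearMap.range (dAux R s)).mkQ (Finsupp.single 0 (s ^ n * r')) := by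
          rw [pow_add, mul_smul, h2, ← map_smul, Finsupp.smul_single, smul_eq_mul]
        show (s ^ (n + k')) • (LinearMap.range (dAux R s)).mkQ (Finsupp.single n b + a) = _
        rw [map_add, smul_add, h1, h3, ← map_add, ← Finsupp.single_add, fQ_apply]
  · -- exists_of_eq
    intro x y hxy
    have h0 : fQ R s (x - y) = 0 := by rw [map_sub, hxy, sub_self]
    rw [fQ_apply, Submodule.mkQ_apply, Submodule.Quotient.mk_eq_zero] at h0
    obtain ⟨b, hb⟩ := h0
    have hbm : ∀ m, b m = s ^ m * (x - y) := by
      intro m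
      induction m with
      | zero =>
          have := congrArg (fun f : ℕ →₀ R => f 0) hb
          simp only [dAux_apply_zero] at this
          simpa using this
      | succ m ih =>
          have h1 := congrArg (fun f : ℕ →₀ R => f (m + 1)) hb
          simp only [dAux_apply_succ] at h1
          have h2 : (Finsupp.single 0 (x - y) : ℕ →₀ R) (m + 1) = 0 := by
            rw [Finsupp.single_apply_eq_zero]; intro h; omega
          rw [h2, sub_eq_zero] at h1
          rw [h1, ih, pow_succ]
          ring
    obtain ⟨N, hNsub⟩ := Finset.exists_nat_subset_range b.support
    have hbN : b N = 0 := by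
      by_contra h
      have := hNsub (Finsupp.mem_support_iff.2 h)
      simp at this
    refine ⟨⟨s ^ N, N, rfl⟩, ?_⟩
    have : s ^ N * (x - y) = 0 := by rw [← hbm, hbN]
    show s ^ N • x = s ^ N • y
    simp only [smul_eq_mul]
    linear_combination this

instance : IsLocalizedModule (Submonoid.powers s)
    (Algebra.linearMap R (Localization.Away s)) :=
  (isLocalizedModule_iff_isLocalization' (Submonoid.powers s) _).mpr inferInstance

/-- The cokernel of `dAux` is the localization away from `s`. -/
def eQL : QAux R s ≃ₗ[R] Localization.Away s :=
  IsLocalizedModule.linearEquiv (Submonoid.powers s) (fQ R s)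
    (Algebra.linearMap R (Localization.Away s))

/-- The augmentation `(ℕ →₀ R) → R[1/s]`. -/
def epsAux : (ℕ →₀ R) →ₗ[R] Localization.Away s :=
  (eQL R s).toLinearMap ∘ₗ (LinearMap.range (dAux R s)).mkQ

lemma epsAux_surjective : Function.Surjective (epsAux R s) :=
  (eQL R s).surjective.comp (Submodule.mkQ_surjective _)

lemma epsAux_ker : LinearMap.ker (epsAux R s) = LinearMap.range (dAux R s) := by
  ext x
  simp only [epsAux, LinearMap.mem_ker, LinearMap.coe_comp, Function.comp_apply,
    LinearEquiv.coe_coe, EmbeddingLike.map_eq_zero_iff, Submodule.mkQ_apply,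
    Submodule.Quotient.mk_eq_zero]

lemma epsAux_comp_dAux : (epsAux R s) ∘ₗ (dAux R s) = 0 := by
  ext a
  have : dAux R s (Finsupp.single a 1) ∈ LinearMap.range (dAux R s) := ⟨_, rfl⟩
  rw [← epsAux_ker] at this
  simpa using this

section Delta

variable (M : Type) [AddCommGroup M] [Module R M]

/-- The map `δ_M : Π M → Π M`, `x ↦ (xₙ - s·xₙ₊₁)ₙ`, whose kernel is `Hom(R[1/s], M)`
and whose cokernel is `Ext¹(R[1/s], M)`. -/
def deltaAux : (ℕ → M) →ₗ[R] (ℕ → M) where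
  toFun x := fun n => x n - s • x (n + 1)
  map_add' x y := by funext n; simp [smul_add]; abel
  map_smul' r x := by funext n; simp [smul_sub, smul_comm r s]

/-- Evaluation on the basis: `Hom((ℕ→₀R), M) ≃ Π M`. -/
def homEquiv : ((ℕ →₀ R) →ₗ[R] M) ≃ (ℕ → M) where
  toFun h := fun n => h (Finsupp.single n 1)
  invFun x := Finsupp.lsum R (fun n => LinearMap.toSpanSingleton R M (x n))
  left_inv h := by
    apply Finsupp.lhom_ext
    intro n b
    rw [Finsupp.lsum_single]
    show b • h (Finsupp.single n 1) = _
    rw [← map_smul, Finsupp.smul_single, smul_eq_mul, mul_one]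
  right_inv x := by
    funext n
    show Finsupp.lsum R (fun n => LinearMap.toSpanSingleton R M (x n)) (Finsupp.single n 1) = x n
    rw [Finsupp.lsum_single, LinearMap.toSpanSingleton_apply, one_smul]

lemma homEquiv_comp_dAux (h : (ℕ →₀ R) →ₗ[R] M) :
    homEquiv R M (h ∘ₗ dAux R s) = deltaAux R s M (homEquiv R M h) := by
  funext n
  show h (dAux R s (Finsupp.single n 1)) = h (Finsupp.single n 1) - s • h (Finsupp.single (n+1) 1)
  rw [dAux_single, map_sub, map_smul]

lemma homEquiv_zero : homEquiv R M (0 : (ℕ →₀ R) →ₗ[R] M) = 0 := by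
  funext n; rfl

/-- Vanishing of `Hom(R[1/s], M)` corresponds to injectivity of `δ_M`. -/
lemma hom_subsingleton_iff :
    Subsingleton (Localization.Away s →ₗ[R] M) ↔ Function.Injective (deltaAux R s M) := by
  constructor
  · intro hsub
    rw [injective_iff_map_eq_zero]
    intro x hx
    set h : (ℕ →₀ R) →ₗ[R] M := (homEquiv R M).symm x with hh
    have hxh : homEquiv R M h = x := (homEquiv R M).apply_symm_apply x
    have hcomp : h ∘ₗ dAux R s = 0 := by
      apply (homEquiv R M).injective
      rw [homEquiv_comp_dAux, hxh, hx, homEquiv_zero]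
    have hle : LinearMap.range (dAux R s) ≤ LinearMap.ker h := by
      rintro _ ⟨a, rfl⟩
      exact LinearMap.congr_fun hcomp a
    set h' := (LinearMap.range (dAux R s)).liftQ h hle with hh'
    have hfact : h = h' ∘ₗ (LinearMap.range (dAux R s)).mkQ := by
      ext a; rfl
    have hg : h' ∘ₗ (eQL R s).symm.toLinearMap = 0 := Subsingleton.elim _ _
    have h'0 : h' = 0 := by
      refine LinearMap.ext fun q => ?_
      have := LinearMap.congr_fun hg (eQL R s q)
      simpa using this
    rw [← hxh, hfact, h'0]
    funext n
    rfl
  · intro hinj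
    constructor
    intro g g'
    suffices hz : ∀ g : Localization.Away s →ₗ[R] M, g = 0 by rw [hz g, hz g']
    intro g
    have hcomp : (g ∘ₗ epsAux R s) ∘ₗ dAux R s = 0 := by
      rw [LinearMap.comp_assoc, epsAux_comp_dAux, LinearMap.comp_zero]
    have : deltaAux R s M (homEquiv R M (g ∘ₗ epsAux R s)) = 0 := by
      rw [← homEquiv_comp_dAux, hcomp, homEquiv_zero]
    have h0 : homEquiv R M (g ∘ₗ epsAux R s) = 0 := by
      apply hinj
      rw [this, map_zero]
    have hge : g ∘ₗ epsAux R s = 0 :=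
      (homEquiv R M).injective (by rw [h0, homEquiv_zero])
    ext y
    obtain ⟨a, rfl⟩ := epsAux_surjective R s y
    exact LinearMap.congr_fun hge a

end Delta

section Core

variable {R s}

/-- δ is bijective on sequences valued in a product if it is so on the factor. -/
lemma deltaAux_pi_bijective {C : Type} [AddCommGroup C] [Module R C]
    (h : Function.Bijective (deltaAux R s C)) :
    Function.Bijective (deltaAux R s (ℕ → C)) := by
  constructor
  · rw [injective_iff_map_eq_zero]
    intro f hf
    funext n m
    have hcol : deltaAux R s C (fun k => f k m) = 0 := by
      funext k
      have := congrFun (congrFun hf k) m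
      simpa [deltaAux] using this
    have : (fun k => f k m) = 0 := h.1 (by rw [hcol, map_zero])
    exact congrFun this n
  · intro y
    choose c hc using fun m => h.2 (fun n => y n m)
    refine ⟨fun n m => c m n, ?_⟩
    funext n m
    have := congrFun (hc m) n
    simpa [deltaAux] using this

/-- δ is bijective on sequences valued in `M ⧸ range φ` if it is so on `M`. -/
lemma deltaAux_quot_bijective {M : Type} [AddCommGroup M] [Module R M] (φ : M →ₗ[R] M)
    (h : Function.Bijective (deltaAux R s M)) :
    Function.Bijective (deltaAux R s (M ⧸ LinearMap.range φ)) := by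
  set N := LinearMap.range φ
  have hcompat : ∀ f : ℕ → M,
      deltaAux R s (M ⧸ N) (fun n => N.mkQ (f n)) = fun n => N.mkQ (deltaAux R s M f n) := by
    intro f
    funext n
    simp [deltaAux, map_sub, map_smul]
  constructor
  · rw [injective_iff_map_eq_zero]
    intro x hx
    choose f hf using fun n => Submodule.mkQ_surjective N (x n)
    have hδ : ∀ n, deltaAux R s M f n ∈ N := by
      intro n
      rw [← Submodule.Quotient.mk_eq_zero, ← Submodule.mkQ_apply]
      have := congrFun (hcompat f) n
      rw [← this]
      have hx' : (fun n => N.mkQ (f n)) = x := funext hf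
      rw [hx', hx]
      rfl
    choose g hg using hδ
    obtain ⟨h', hh'⟩ := h.2 g
    have : deltaAux R s M (fun n => φ (h' n)) = deltaAux R s M f := by
      funext n
      have h1 : (fun n => φ (h' n)) = fun n => φ (h' n) := rfl
      show φ (h' n) - s • φ (h' (n + 1)) = deltaAux R s M f n
      rw [← map_smul, ← map_sub, ← hg n]
      congr 1
      have := congrFun hh' n
      simpa [deltaAux] using this
    have hfφ : (fun n => φ (h' n)) = f := h.1 this
    funext n
    show x n = 0
    rw [← hf n, ← congrFun hfφ n, Submodule.mkQ_apply, Submodule.Quotient.mk_eq_zero]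
    exact ⟨h' n, rfl⟩
  · intro y
    choose f hf using fun n => Submodule.mkQ_surjective N (y n)
    obtain ⟨g, hg⟩ := h.2 f
    refine ⟨fun n => N.mkQ (g n), ?_⟩
    rw [hcompat g, hg]
    exact funext hf

end Core

section Resolution

open Limits



/-- Objects of the resolution. -/
noncomputable def Xf : ℕ → ModuleCat R
  | 0 => ModuleCat.of R (ℕ →₀ R)
  | 1 => ModuleCat.of R (ℕ →₀ R)
  | _ + 2 => ModuleCat.of R PUnit

/-- Differentials of the resolution. -/
noncomputable def df : ∀ n, Xf R (n + 1) ⟶ Xf R n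
  | 0 => ModuleCat.ofHom (dAux R s)
  | _ + 1 => 0

/-- The two-term free resolution `… → 0 → (ℕ→₀R) → (ℕ→₀R)` of `R[1/s]`. -/
noncomputable def Kc : ChainComplex (ModuleCat R) ℕ :=
  ChainComplex.of (Xf R) (df R s) (fun n => by
    show df R s (n + 1) ≫ df R s n = 0
    have : df R s (n + 1) = 0 := rfl
    rw [this, zero_comp])

lemma Kc_d10 : (Kc R s).d 1 0 = ModuleCat.ofHom (dAux R s) :=
  ChainComplex.of_d (Xf R) (df R s) 0

lemma Kc_d21 : (Kc R s).d 2 1 = 0 :=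
  ChainComplex.of_d (Xf R) (df R s) 1

/-- The module `R[1/s]` as an object of `ModuleCat R`. -/
noncomputable abbrev LMod : ModuleCat R := ModuleCat.of R (Localization.Away s)

/-- The augmentation map of the resolution. -/
noncomputable def piK : Kc R s ⟶ (ChainComplex.single₀ (ModuleCat R)).obj (LMod R s) :=
  (ChainComplex.toSingle₀Equiv (Kc R s) (LMod R s)).symm
    ⟨ModuleCat.ofHom (epsAux R s), by
      rw [Kc_d10]
      apply ModuleCat.hom_ext
      apply LinearMap.ext
      intro a
      exact LinearMap.congr_fun (epsAux_comp_dAux R s) a⟩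

lemma piK_f_zero : (piK R s).f 0 = ModuleCat.ofHom (epsAux R s) :=
  ChainComplex.toSingle₀Equiv_symm_apply_f_zero _ _

end Resolution

section ResolutionQI

open Limits

instance Kc_quasiIso : QuasiIso (piK R s) := by
  constructor
  intro n
  match n with
  | 0 =>
      rw [ChainComplex.quasiIsoAt₀_iff]
      rw [ShortComplex.quasiIso_iff_of_zeros']
      rotate_left
      · exact (Kc R s).shape 0 0 (by simp)
      · exact (HomologicalComplex.isZero_single_obj_X (ComplexShape.down ℕ) 0 (LMod R s) 1
          (by simp)).eq_of_src _ _
      · exact ((ChainComplex.single₀ (ModuleCat R)).obj (LMod R s)).shape 0 0 (by simp)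
      constructor
      · rw [ShortComplex.moduleCat_exact_iff]
        intro x₂ hx₂
        have e1 : (piK R s).f 0 x₂ = 0 := hx₂
        have e2 : (piK R s).f 0 x₂ = epsAux R s x₂ := by rw [piK_f_zero]; rfl
        have hx₂' : x₂ ∈ LinearMap.ker (epsAux R s) := e2.symm.trans e1
        rw [epsAux_ker] at hx₂'
        obtain ⟨a, ha⟩ := hx₂'
        refine ⟨a, ?_⟩
        show ((Kc R s).d 1 0) a = x₂
        rw [Kc_d10]
        exact ha
      · show Epi ((piK R s).f 0)
        rw [piK_f_zero]
        exact (ModuleCat.epi_iff_surjective _).2 (epsAux_surjective R s)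
  | n + 1 =>
      rw [quasiIsoAt_iff_exactAt' (piK R s) (n + 1)
        (ChainComplex.exactAt_succ_single_obj _ _)]
      rw [HomologicalComplex.exactAt_iff' _ (n + 2) (n + 1) n (by simp) (by simp)]
      match n with
      | 0 =>
          rw [ShortComplex.moduleCat_exact_iff]
          intro x₂ hx₂
          have e1 : ((Kc R s).d 1 0) x₂ = 0 := hx₂
          have e2 : ((Kc R s).d 1 0) x₂ = dAux R s x₂ := by rw [Kc_d10]; rfl
          have : x₂ ∈ LinearMap.ker (dAux R s) := e2.symm.trans e1
          have hx0 : x₂ = 0 := by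
            rw [LinearMap.ker_eq_bot.mpr (dAux_injective R s)] at this
            exact this
          exact ⟨0, by rw [map_zero, hx0]⟩
      | n + 1 =>
          exact ShortComplex.exact_of_isZero_X₂ _
            (@ModuleCat.isZero_of_subsingleton R _ _ (inferInstanceAs (Subsingleton PUnit)))

/-- The two-term resolution as a `ProjectiveResolution` of `R[1/s]`. -/
noncomputable def resol : ProjectiveResolution (LMod R s) where
  complex := Kc R s
  projective n := by
    match n with
    | 0 => exact ModuleCat.projective_of_free (Finsupp.basisSingleOne)
    | 1 => exact ModuleCat.projective_of_free (Finsupp.basisSingleOne)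
    | n + 2 =>
        show Projective (ModuleCat.of R PUnit)
        exact ModuleCat.projective_of_free (Module.Basis.empty (ι := PEmpty.{1}) _)
  π := piK R s

end ResolutionQI

section ExtIff

open Limits

lemma subsingleton_of_isZero {N : ModuleCat R} (h : IsZero N) : Subsingleton N :=
  haveI : Subsingleton (ModuleCat.of R PUnit) := inferInstanceAs (Subsingleton PUnit)
  (h.iso (ModuleCat.isZero_of_subsingleton (ModuleCat.of R PUnit))).toLinearEquiv.toEquiv.subsingleton

variable (M : Type) [AddCommGroup M] [Module R M]

lemma ext_one_subsingleton_iff :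
    Subsingleton (((Ext R (ModuleCat R) 1).obj (op (LMod R s))).obj (ModuleCat.of R M)) ↔
      Function.Surjective (deltaAux R s M) := by
  set Qc := (Kc R s).linearYonedaObj R (ModuleCat.of R M) with hQc
  have hiso : (((Ext R (ModuleCat R) 1).obj (op (LMod R s))).obj (ModuleCat.of R M)) ≅
      Qc.homology 1 := (resol R s).isoExt 1 (ModuleCat.of R M)
  rw [Equiv.subsingleton_congr hiso.toLinearEquiv.toEquiv]
  have hZ : Subsingleton (Qc.homology 1) ↔ Qc.ExactAt 1 := by
    rw [HomologicalComplex.exactAt_iff_isZero_homology]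
    exact ⟨fun h => ModuleCat.isZero_of_subsingleton _, fun h => subsingleton_of_isZero R h⟩
  rw [hZ, HomologicalComplex.exactAt_iff' _ 0 1 2 (by simp) (by simp),
    ShortComplex.moduleCat_exact_iff]
  haveI hsub2 : Subsingleton ((Qc.sc' 0 1 2).X₃) := by
    refine ⟨fun f g => ?_⟩
    have hf : (f : (Kc R s).X 2 ⟶ ModuleCat.of R M) = g := by
      apply ModuleCat.hom_ext
      apply LinearMap.ext
      intro x
      have hx : x = (0 : (Kc R s).X 2) := Subsingleton.elim (α := PUnit) x 0
      rw [hx, map_zero, map_zero]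
    exact hf
  have hfd : ∀ (x₁ : ((Kc R s).X 0 ⟶ ModuleCat.of R M)),
      (Qc.sc' 0 1 2).f x₁
        = (ModuleCat.ofHom (x₁.hom ∘ₗ dAux R s : (ℕ →₀ R) →ₗ[R] M) : ((Kc R s).X 1 ⟶ ModuleCat.of R M)) := by
    intro x₁
    show ((Kc R s).d 1 0 ≫ x₁) = _
    apply ModuleCat.hom_ext
    apply LinearMap.ext
    intro a
    show x₁ ((Kc R s).d 1 0 a) = x₁ (dAux R s a)
    rw [Kc_d10]
    rfl
  constructor
  · intro hsurj y
    obtain ⟨x₁, hx₁⟩ := hsurj (ModuleCat.ofHom ((homEquiv R M).symm y)) (Subsingleton.elim _ _)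
    let x₁' : (ℕ →₀ R) →ₗ[R] M := ModuleCat.Hom.hom (x₁ : (Kc R s).X 0 ⟶ ModuleCat.of R M)
    have hx₁' : (x₁' ∘ₗ dAux R s) = ((homEquiv R M).symm y : (ℕ →₀ R) →ₗ[R] M) := by
      exact congrArg ModuleCat.Hom.hom ((hfd x₁).symm.trans hx₁ :
        ModuleCat.ofHom (x₁' ∘ₗ dAux R s) = ModuleCat.ofHom ((homEquiv R M).symm y))
    refine ⟨homEquiv R M x₁', ?_⟩
    rw [← homEquiv_comp_dAux, hx₁', Equiv.apply_symm_apply]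
  · intro hsurj x₂ _
    obtain ⟨x, hx⟩ := hsurj (homEquiv R M ((x₂ : (Kc R s).X 1 ⟶ ModuleCat.of R M).hom : (ℕ →₀ R) →ₗ[R] M))
    refine ⟨ModuleCat.ofHom ((homEquiv R M).symm x), ?_⟩
    have h2 : (((homEquiv R M).symm x : (ℕ →₀ R) →ₗ[R] M) ∘ₗ dAux R s)
        = ((x₂ : (Kc R s).X 1 ⟶ ModuleCat.of R M).hom : (ℕ →₀ R) →ₗ[R] M) := by
      apply (homEquiv R M).injective
      rw [homEquiv_comp_dAux, Equiv.apply_symm_apply, hx]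
    rw [hfd (ModuleCat.ofHom ((homEquiv R M).symm x))]
    exact congrArg ModuleCat.ofHom h2

end ExtIff

end ContraAux

/-- Let `R` be a commutative ring and `s, t ∈ R`. If an `R`-module `C` is
an `s`-contramodule, then `Δ_t(C)`, the cokernel of `φ : Π_{n≥1} C → Π_{n≥0} C`,
`(cₙ) ↦ (cₙ - t·cₙ₊₁)` (with `c₀ = 0`), is again an `s`-contramodule. -/
theorem delta_t_of_contramodule_isContramodule
    (R : Type) [CommRing R] (s t : R) (C : Type) [AddCommGroup C] [Module R C]
    (hC : Subsingleton (Localization.Away s →ₗ[R] C) ∧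
      Subsingleton (((Ext R (ModuleCat R) 1).obj
        (op (ModuleCat.of R (Localization.Away s)))).obj (ModuleCat.of R C))) :
    Subsingleton (Localization.Away s →ₗ[R] ((ℕ → C) ⧸ LinearMap.range (phiMap R C t))) ∧
      Subsingleton (((Ext R (ModuleCat R) 1).obj
        (op (ModuleCat.of R (Localization.Away s)))).obj
        (ModuleCat.of R ((ℕ → C) ⧸ LinearMap.range (phiMap R C t)))) := by
  obtain ⟨h1, h2⟩ := hC
  have hinjC : Function.Injective (deltaAux R s C) := (hom_subsingleton_iff R s C).1 h1
  have hsurjC : Function.Surjective (deltaAux R s C) := (ext_one_subsingleton_iff R s C).1 h2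
  have hbij : Function.Bijective (deltaAux R s (ℕ → C)) :=
    deltaAux_pi_bijective ⟨hinjC, hsurjC⟩
  have hbijD := deltaAux_quot_bijective (phiMap R C t) hbij
  exact ⟨(hom_subsingleton_iff R s _).2 hbijD.1, (ext_one_subsingleton_iff R s _).2 hbijD.2⟩
end

section
/- Let A be an associative ring and J ⊂ A a two-sided ideal with Jⁿ = 0 for some n ≥ 1. Let P be a flat left A-module such that P/JP is a projective left (A/J)-module. Then P is a projective A-module. Moreover, if P/JP is free over A/J, then P is free over A. -/
/-- Flatness of a left module over an associative ring, expressed by the equational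
criterion: every finite relation `∑ aᵢ • xᵢ = 0` comes from relations in the ring, i.e.
there are `yⱼ ∈ P` and `bᵢⱼ ∈ A` with `xᵢ = ∑ⱼ bᵢⱼ • yⱼ` and `∑ᵢ aᵢ * bᵢⱼ = 0`. -/
def IsFlatLeftModule (A : Type) [Ring A] (P : Type) [AddCommGroup P] [Module A P] : Prop :=
  ∀ (n : ℕ) (a : Fin n → A) (x : Fin n → P), (∑ i, a i • x i) = 0 →
    ∃ (m : ℕ) (b : Fin n → Fin m → A) (y : Fin m → P),
      (∀ i, x i = ∑ j, b i j • y j) ∧ ∀ j, (∑ i, a i * b i j) = 0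

section JPow

variable {A B : Type} [Ring A] [Ring B] (π : A →+* B)
variable {M : Type} [AddCommGroup M] [Module A M]

/-- The submodule spanned by `(j₁⋯jₘ) • w` with `jᵢ ∈ ker π`, `w ∈ W`. -/
def JPow (m : ℕ) (W : Submodule A M) : Submodule A M :=
  Submodule.span A
    {z | ∃ l : List A, l.length = m ∧ (∀ x ∈ l, π x = 0) ∧ ∃ w ∈ W, z = l.prod • w}

lemma JPow.aux {m : ℕ} {W : Submodule A M} {t : M} (ht : t ∈ JPow π 1 W) :
    ∀ l : List A, l.length = m → (∀ x ∈ l, π x = 0) → ∀ r : A,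
      (l.prod * r) • t ∈ JPow π (m + 1) W := by
  induction ht using Submodule.span_induction with
  | mem x hx =>
    rintro l hl hker r
    obtain ⟨l1, hl1, hker1, w, hw, rfl⟩ := hx
    obtain ⟨a, rfl⟩ := List.length_eq_one_iff.mp hl1
    refine Submodule.subset_span ⟨l ++ [r * a], by simp [hl], ?_, w, hw, ?_⟩
    · intro x hx
      rcases List.mem_append.mp hx with h | h
      · exact hker x h
      · rcases List.mem_singleton.mp h with rfl
        simp [map_mul, hker1 a (List.mem_singleton_self a)]
    · rw [List.prod_append, List.prod_singleton, List.prod_singleton, smul_smul]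
      rw [mul_assoc]
  | zero => intro l hl hker r; simp
  | add x y hx hy ihx ihy =>
    intro l hl hker r
    rw [smul_add]
    exact Submodule.add_mem _ (ihx l hl hker r) (ihy l hl hker r)
  | smul a x hx ih =>
    intro l hl hker r
    rw [smul_smul, mul_assoc]
    exact ih l hl hker (r * a)


lemma JPow.smul_mem {m : ℕ} {W : Submodule A M} {t : M} (ht : t ∈ JPow π 1 W)
    (l : List A) (hl : l.length = m) (hker : ∀ x ∈ l, π x = 0) :
    l.prod • t ∈ JPow π (m + 1) W := by
  have := JPow.aux π ht l hl hker 1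
  rwa [mul_one] at this

lemma JPow.eq_bot {n : ℕ} (hnil : ∀ l : List A, l.length = n → (∀ x ∈ l, π x = 0) → l.prod = 0)
    (W : Submodule A M) : JPow π n W = ⊥ := by
  rw [eq_bot_iff, JPow, Submodule.span_le]
  rintro z ⟨l, hl, hker, w, hw, rfl⟩
  simp [hnil l hl hker]

/-- Nilpotent Nakayama, kernel form: if `W ≤ J·W` then `W = ⊥`. -/
lemma JPow.eq_bot_of_le_one {n : ℕ} (hn : 1 ≤ n)
    (hnil : ∀ l : List A, l.length = n → (∀ x ∈ l, π x = 0) → l.prod = 0)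
    {W : Submodule A M} (hW : W ≤ JPow π 1 W) : W = ⊥ := by
  have key : ∀ m, 1 ≤ m → W ≤ JPow π m W := by
    refine Nat.le_induction hW fun m hm ih => ih.trans ?_
    rw [JPow, Submodule.span_le]
    rintro z ⟨l, hl, hker, w, hw, rfl⟩
    exact JPow.smul_mem π (hW hw) l hl hker
  rw [eq_bot_iff, ← JPow.eq_bot π hnil W]
  exact key n hn

/-- Nilpotent Nakayama, surjectivity form: if `⊤ = S + J·⊤` then `S = ⊤`. -/
lemma JPow.sup_eq_top {n : ℕ} (hn : 1 ≤ n)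
    (hnil : ∀ l : List A, l.length = n → (∀ x ∈ l, π x = 0) → l.prod = 0)
    {S : Submodule A M} (h1 : ∀ p : M, p ∈ S ⊔ JPow π 1 ⊤) : ∀ p : M, p ∈ S := by
  have step : ∀ m, JPow π m (⊤ : Submodule A M) ≤ S ⊔ JPow π (m + 1) ⊤ := by
    intro m
    rw [JPow, Submodule.span_le]
    rintro z ⟨l, hl, hker, w, -, rfl⟩
    obtain ⟨s, hs, t, ht, rfl⟩ := Submodule.mem_sup.mp (h1 w)
    rw [smul_add]
    exact Submodule.add_mem _
      (Submodule.mem_sup_left (Submodule.smul_mem _ _ hs))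
      (Submodule.mem_sup_right (JPow.smul_mem π ht l hl hker))
  have key : ∀ m, 1 ≤ m → ∀ p : M, p ∈ S ⊔ JPow π m ⊤ := by
    refine Nat.le_induction h1 fun m hm ih p => ?_
    obtain ⟨s, hs, t, ht, rfl⟩ := Submodule.mem_sup.mp (ih p)
    exact Submodule.add_mem _ (Submodule.mem_sup_left hs) (step m ht)
  intro p
  have := key n hn p
  rwa [JPow.eq_bot π hnil, sup_bot_eq] at this

end JPow

section Flat

variable {A : Type} [Ring A]

theorem flat_finsupp (σ : Type) : IsFlatLeftModule A (σ →₀ A) := by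
  classical
  intro nn a g hrel
  set s : Finset σ := Finset.univ.biUnion (fun i => (g i).support) with hs
  let eqv := s.equivFin
  let c : Fin s.card → σ := fun j => (eqv.symm j : σ)
  refine ⟨s.card, fun i j => g i (c j), fun j => Finsupp.single (c j) 1, ?_, ?_⟩
  · intro i
    have hsub : (g i).support ⊆ s := fun x hx =>
      Finset.mem_biUnion.mpr ⟨i, Finset.mem_univ i, hx⟩
    have h1 : (∑ j, g i (c j) • Finsupp.single (c j) (1:A))
        = ∑ x ∈ s, Finsupp.single x (g i x) := by
      rw [← Finset.sum_coe_sort s (fun x => Finsupp.single x (g i x)),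
        ← Equiv.sum_comp eqv.symm (fun (x : s) => Finsupp.single (x : σ) (g i x))]
      exact Finset.sum_congr rfl fun j _ => by
        rw [Finsupp.smul_single' (g i (c j)) (c j) 1, mul_one]
    rw [h1, ← Finset.sum_subset hsub (fun x _ hx => by
      rw [Finsupp.notMem_support_iff.mp hx, Finsupp.single_zero])]
    exact (Finsupp.sum_single (g i)).symm
  · intro j
    have := DFunLike.congr_fun hrel (c j)
    simpa [Finsupp.finset_sum_apply, Finsupp.smul_apply, smul_eq_mul] using this

theorem flat_prod (P F : Type) [AddCommGroup P] [Module A P] [AddCommGroup F] [Module A F]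
    (hP : IsFlatLeftModule A P) (hF : IsFlatLeftModule A F) : IsFlatLeftModule A (P × F) := by
  intro nn a x hrel
  have h1 : (∑ i, a i • (x i).1) = 0 := by
    have := congrArg Prod.fst hrel
    simpa [Prod.fst_sum] using this
  have h2 : (∑ i, a i • (x i).2) = 0 := by
    have := congrArg Prod.snd hrel
    simpa [Prod.snd_sum] using this
  obtain ⟨m1, b1, y1, hxy1, hb1⟩ := hP nn a (fun i => (x i).1) h1
  obtain ⟨m2, b2, y2, hxy2, hb2⟩ := hF nn a (fun i => (x i).2) h2
  refine ⟨m1 + m2, fun i => Fin.append (b1 i) (b2 i),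
    Fin.append (fun j => ((y1 j, 0) : P × F)) (fun j => ((0, y2 j) : P × F)), ?_, ?_⟩
  · intro i
    refine Prod.ext ?_ ?_
    · rw [Prod.fst_sum, Fin.sum_univ_add]
      simp only [Fin.append_left, Fin.append_right, Prod.smul_fst, smul_zero]
      rw [Finset.sum_const_zero, add_zero]
      exact hxy1 i
    · rw [Prod.snd_sum, Fin.sum_univ_add]
      simp only [Fin.append_left, Fin.append_right, Prod.smul_snd, smul_zero]
      rw [Finset.sum_const_zero, zero_add]
      exact hxy2 i
  · intro j
    refine Fin.addCases ?_ ?_ j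
    · intro j'
      simpa [Fin.append_left] using hb1 j'
    · intro j'
      simpa [Fin.append_right] using hb2 j'

end Flat

section Swindle

variable {R : Type} [Ring R]

/-- `α →₀ M × N` is linearly equivalent to `(α →₀ M) × (α →₀ N)`. -/
noncomputable def finsuppProdEquivL (α M N : Type) [AddCommMonoid M] [AddCommMonoid N]
    [Module R M] [Module R N] : (α →₀ M × N) ≃ₗ[R] (α →₀ M) × (α →₀ N) :=
  LinearEquiv.ofLinear
    (LinearMap.prod (Finsupp.mapRange.linearMap (LinearMap.fst R M N))
      (Finsupp.mapRange.linearMap (LinearMap.snd R M N)))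
    ((Finsupp.mapRange.linearMap (LinearMap.inl R M N)).coprod
      (Finsupp.mapRange.linearMap (LinearMap.inr R M N)))
    (by
      apply LinearMap.prod_ext <;> ext x i <;>
        simp)
    (by
      ext x i <;> simp)

/-- Linear product associativity. -/
def lprodAssoc (M N P : Type) [AddCommMonoid M] [AddCommMonoid N] [AddCommMonoid P]
    [Module R M] [Module R N] [Module R P] : ((M × N) × P) ≃ₗ[R] M × N × P :=
  { Equiv.prodAssoc M N P with
    map_add' := fun _ _ => rfl
    map_smul' := fun _ _ => rfl }

/-- Eilenberg swindle: if `Q` is projective then `Q ⊕ (ℕ×Q →₀ R)` is free. -/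
theorem swindle (Q : Type) [AddCommGroup Q] [Module R Q] (hQ : Module.Projective R Q) :
    Module.Free R (Q × ((ℕ × Q) →₀ R)) := by
  classical
  obtain ⟨s, hs⟩ := Module.projective_def.mp hQ
  set t : (Q →₀ R) →ₗ[R] Q := Finsupp.linearCombination R id with ht
  set K := LinearMap.ker t with hK
  let e1 : (Q →₀ R) ≃ₗ[R] Q × K :=
    { toFun := fun x => (t x, ⟨x - s (t x), by simp [hK, LinearMap.mem_ker, map_sub, hs (t x)]⟩)
      invFun := fun z => s z.1 + z.2.1
      left_inv := fun x => by simp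
      right_inv := fun z => by
        have h2 : t z.2.1 = 0 := z.2.2
        refine Prod.ext (by simp [h2, hs z.1]) (Subtype.ext ?_)
        show s z.1 + (z.2 : Q →₀ R) - s (t (s z.1 + (z.2 : Q →₀ R))) = z.2
        rw [map_add, h2, add_zero, hs z.1]
        abel
      map_add' := fun x y => by
        refine Prod.ext (by simp) (Subtype.ext ?_)
        simp; abel
      map_smul' := fun c x => by
        refine Prod.ext (by simp) (Subtype.ext ?_)
        simp [smul_sub] }
  let E : ((ℕ × Q) →₀ R) ≃ₗ[R] (ℕ →₀ Q) × (ℕ →₀ K) :=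
    (Finsupp.finsuppProdLEquiv R).trans
      ((Finsupp.mapRange.linearEquiv e1).trans (finsuppProdEquivL ℕ Q K))
  let n1 : (ℕ →₀ Q) ≃ₗ[R] (ℕ →₀ Q) × Q :=
    (Finsupp.domLCongr Equiv.natEquivNatSumPUnit.{0}).trans
      ((Finsupp.sumFinsuppLEquivProdFinsupp R).trans
        ((LinearEquiv.refl R (ℕ →₀ Q)).prodCongr (Finsupp.LinearEquiv.finsuppUnique R Q PUnit.{1})))
  let shift : (Q × (ℕ →₀ Q)) ≃ₗ[R] (ℕ →₀ Q) :=
    (LinearEquiv.prodComm R Q (ℕ →₀ Q)).trans n1.symm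
  let total : (Q × ((ℕ × Q) →₀ R)) ≃ₗ[R] ((ℕ × Q) →₀ R) :=
    ((LinearEquiv.refl R Q).prodCongr E).trans
      ((lprodAssoc Q (ℕ →₀ Q) (ℕ →₀ K)).symm.trans
        ((shift.prodCongr (LinearEquiv.refl R (ℕ →₀ K))).trans E.symm))
  exact Module.Free.of_equiv total.symm

end Swindle

section Transfer

variable (A B : Type) [Ring A] [Ring B] (π : A →+* B)
variable (P : Type) [AddCommGroup P] [Module A P]
variable (Q : Type) [AddCommGroup Q] [Module B Q]

theorem transfer (hπ : Function.Surjective π)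
    (N : Submodule A P)
    (hN : N = Submodule.span A { z : P | ∃ a : A, ∃ p : P, π a = 0 ∧ z = a • p })
    (e : (P ⧸ N) ≃+ Q) (he : ∀ (a : A) (x : P ⧸ N), e (a • x) = π a • e x)
    (σ : Type) :
    ∃ (N' : Submodule A (P × (σ →₀ A)))
      (e' : ((P × (σ →₀ A)) ⧸ N') ≃+ (Q × (σ →₀ B))),
      N' = Submodule.span A
          { z : P × (σ →₀ A) | ∃ a : A, ∃ p : P × (σ →₀ A), π a = 0 ∧ z = a • p } ∧
      ∀ (a : A) (x : (P × (σ →₀ A)) ⧸ N'), e' (a • x) = π a • e' x := by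
  classical
  set N' : Submodule A (P × (σ →₀ A)) := Submodule.span A
      { z : P × (σ →₀ A) | ∃ a : A, ∃ p : P × (σ →₀ A), π a = 0 ∧ z = a • p } with hN'
  have hmaprange_smul : ∀ (a : A) (g : σ →₀ A),
      Finsupp.mapRange ⇑π (map_zero π) (a • g) = π a • Finsupp.mapRange ⇑π (map_zero π) g := by
    intro a g
    ext i
    simp [Finsupp.mapRange_apply]
  have hPincl : ∀ p0, p0 ∈ N → ((p0, 0) : P × (σ →₀ A)) ∈ N' := by
    intro p0 hp0
    rw [hN] at hp0
    induction hp0 using Submodule.span_induction with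
    | mem x hx =>
      obtain ⟨a, p', ha, rfl⟩ := hx
      exact Submodule.subset_span ⟨a, (p', 0), ha, by simp [Prod.smul_mk]⟩
    | zero => exact Submodule.zero_mem N'
    | add x y hx hy ihx ihy => simpa [Prod.mk_add_mk] using Submodule.add_mem _ ihx ihy
    | smul a x hx ih =>
      have : ((a • x, 0) : P × (σ →₀ A)) = a • (x, 0) := by simp [Prod.smul_mk]
      rw [this]
      exact Submodule.smul_mem _ _ ih
  let Φ : (P × (σ →₀ A)) →ₛₗ[π] Q × (σ →₀ B) :=
    { toFun := fun z => (e (Submodule.Quotient.mk z.1), Finsupp.mapRange ⇑π (map_zero π) z.2)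
      map_add' := by
        intro z w
        refine Prod.ext ?_ ?_
        · show e (Submodule.Quotient.mk (z.1 + w.1))
              = e (Submodule.Quotient.mk z.1) + e (Submodule.Quotient.mk w.1)
          rw [← map_add]
          rfl
        · exact Finsupp.mapRange_add (hf := map_zero π) (map_add π) z.2 w.2
      map_smul' := by
        intro a z
        refine Prod.ext ?_ ?_
        · show e (Submodule.Quotient.mk (a • z.1)) = π a • e (Submodule.Quotient.mk z.1)
          rw [← he]
          rfl
        · exact hmaprange_smul a z.2 }
  have hΦker : LinearMap.ker Φ = N' := by
    apply le_antisymm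
    · rintro ⟨zp, zf⟩ hz
      rw [LinearMap.mem_ker] at hz
      have hz1 : e (Submodule.Quotient.mk zp) = 0 := congrArg Prod.fst hz
      have hz2 : Finsupp.mapRange ⇑π (map_zero π) zf = 0 := congrArg Prod.snd hz
      have hzp : zp ∈ N := by
        rwa [EmbeddingLike.map_eq_zero_iff, Submodule.Quotient.mk_eq_zero] at hz1
      have hcoord : ∀ i, π (zf i) = 0 := by
        intro i
        have := DFunLike.congr_fun hz2 i
        simpa [Finsupp.mapRange_apply] using this
      have h1 : ((zp, 0) : P × (σ →₀ A)) ∈ N' := hPincl zp hzp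
      have h2 : ((0, zf) : P × (σ →₀ A)) ∈ N' := by
        have hrep : ((0, zf) : P × (σ →₀ A))
            = ∑ i ∈ zf.support, ((0, Finsupp.single i (zf i)) : P × (σ →₀ A)) := by
          refine Prod.ext ?_ ?_
          · simp [Prod.fst_sum]
          · rw [Prod.snd_sum]
            simp only
            exact (Finsupp.sum_single zf).symm
        rw [hrep]
        refine Submodule.sum_mem _ fun i _ => ?_
        have : ((0, Finsupp.single i (zf i)) : P × (σ →₀ A))
            = (zf i) • ((0, Finsupp.single i 1) : P × (σ →₀ A)) := by
          refine Prod.ext (by simp) ?_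
          simp [Finsupp.smul_single']
        rw [this]
        exact Submodule.subset_span ⟨zf i, (0, Finsupp.single i 1), hcoord i, rfl⟩
      have : ((zp, zf) : P × (σ →₀ A)) = (zp, 0) + (0, zf) := by simp
      rw [this]
      exact Submodule.add_mem _ h1 h2
    · rw [hN', Submodule.span_le]
      rintro z ⟨a, p', ha, rfl⟩
      rw [SetLike.mem_coe, LinearMap.mem_ker, Φ.map_smulₛₗ, ha, zero_smul]
  -- surjectivity of Φ
  have hρ : ∀ c : B, ∃ a : A, π a = c := hπ
  choose ρ hρ using hρ
  let ρ' : B → A := fun c => if c = 0 then 0 else ρ c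
  have hρ' : ∀ c, π (ρ' c) = c := by
    intro c
    by_cases h : c = 0 <;> simp [ρ', h, hρ]
  have hρ'0 : ρ' 0 = 0 := by simp [ρ']
  have hΦsurj : Function.Surjective Φ := by
    rintro ⟨zq, h⟩
    obtain ⟨xq, hxq⟩ := e.surjective zq
    obtain ⟨p, rfl⟩ := Submodule.Quotient.mk_surjective N xq
    refine ⟨(p, h.mapRange ρ' hρ'0), Prod.ext hxq ?_⟩
    show Finsupp.mapRange ⇑π (map_zero π) (h.mapRange ρ' hρ'0) = h
    ext i
    simp [Finsupp.mapRange_apply, hρ']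
  let L := Submodule.liftQ N' Φ (le_of_eq hΦker.symm)
  have hLinj : Function.Injective L := by
    rw [← LinearMap.ker_eq_bot]
    exact Submodule.ker_liftQ_eq_bot _ _ _ (le_of_eq hΦker)
  have hLsurj : Function.Surjective L := by
    intro z
    obtain ⟨w, hw⟩ := hΦsurj z
    exact ⟨Submodule.Quotient.mk w, hw⟩
  refine ⟨N', AddEquiv.ofBijective L.toAddMonoidHom ⟨hLinj, hLsurj⟩, rfl, ?_⟩
  intro a x
  exact L.map_smulₛₗ a x

end Transfer

section FreeMain

variable (A B : Type) [Ring A] [Ring B] (π : A →+* B)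
variable (P : Type) [AddCommGroup P] [Module A P]
variable (Q : Type) [AddCommGroup Q] [Module B Q]

theorem free_main (hπ : Function.Surjective π)
    (n : ℕ) (hn : 1 ≤ n)
    (hnil : ∀ l : List A, l.length = n → (∀ x ∈ l, π x = 0) → l.prod = 0)
    (hflat : IsFlatLeftModule A P)
    (N : Submodule A P)
    (hN : N = Submodule.span A { z : P | ∃ a : A, ∃ p : P, π a = 0 ∧ z = a • p })
    (e : (P ⧸ N) ≃+ Q) (he : ∀ (a : A) (x : P ⧸ N), e (a • x) = π a • e x)
    (hQ : Module.Free B Q) : Module.Free A P := by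
  classical
  -- the π-semilinear quotient map
  let q : P →ₛₗ[π] Q :=
    { toFun := fun p => e (Submodule.Quotient.mk p)
      map_add' := by intro p₁ p₂; rw [← map_add]; rfl
      map_smul' := by
        intro a p
        show e (Submodule.Quotient.mk (a • p)) = π a • e (Submodule.Quotient.mk p)
        rw [← he]
        rfl }
  have hq_surj : Function.Surjective q := fun z => by
    obtain ⟨x, hx⟩ := e.surjective z
    obtain ⟨p, rfl⟩ := Submodule.Quotient.mk_surjective N x
    exact ⟨p, hx⟩
  have hq_zero : ∀ p : P, q p = 0 ↔ p ∈ N := by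
    intro p
    show e _ = 0 ↔ _
    rw [EmbeddingLike.map_eq_zero_iff, Submodule.Quotient.mk_eq_zero]
  -- basis of Q, lifted generators of P
  let b := hQ.chooseBasis
  have hp : ∀ i, ∃ pi : P, q pi = b i := fun i => hq_surj (b i)
  choose p hp using hp
  let f : (hQ.ChooseBasisIndex →₀ A) →ₗ[A] P := Finsupp.linearCombination A p
  -- a set-theoretic section of π sending 0 to 0
  have hρ : ∀ c : B, ∃ a : A, π a = c := hπ
  choose ρ hρ using hρ
  let ρ' : B → A := fun c => if c = 0 then 0 else ρ c
  have hρ' : ∀ c, π (ρ' c) = c := by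
    intro c
    by_cases h : c = 0 <;> simp [ρ', h, hρ]
  have hρ'0 : ρ' 0 = 0 := by simp [ρ']
  -- key commutation
  have hcomm : ∀ g : hQ.ChooseBasisIndex →₀ A,
      q (f g) = Finsupp.linearCombination B ⇑b (g.mapRange ⇑π (map_zero π)) := by
    intro g
    rw [Finsupp.linearCombination_apply, Finsupp.linearCombination_apply, map_finsuppSum,
      Finsupp.sum_mapRange_index (by intro i; simp)]
    exact Finsupp.sum_congr fun i _ => q.map_smulₛₗ (g i) (p i) ▸ by rw [hp]
  -- coefficients of kernel elements lie in ker π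
  have hker : ∀ g : hQ.ChooseBasisIndex →₀ A, q (f g) = 0 → ∀ i, π (g i) = 0 := by
    intro g hg i
    rw [hcomm] at hg
    have := linearIndependent_iff.mp b.linearIndependent _ hg
    have := DFunLike.congr_fun this i
    simpa [Finsupp.mapRange_apply] using this
  -- q ∘ f is surjective
  have hsurj_q : ∀ z : Q, ∃ g, q (f g) = z := by
    intro z
    refine ⟨(b.repr z).mapRange ρ' hρ'0, ?_⟩
    rw [hcomm]
    have : ((b.repr z).mapRange ρ' hρ'0).mapRange ⇑π (map_zero π) = b.repr z := by
      ext i; simp [Finsupp.mapRange_apply, hρ']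
    rw [this, b.linearCombination_repr]
  -- N sits inside J·P
  have hNle : N ≤ JPow π 1 (⊤ : Submodule A P) := by
    rw [hN, Submodule.span_le]
    rintro z ⟨a, p', ha, rfl⟩
    exact Submodule.subset_span ⟨[a], rfl, by simpa using ha, p', trivial, by simp⟩
  -- surjectivity of f via nilpotent Nakayama
  have h1 : ∀ p0 : P, p0 ∈ LinearMap.range f ⊔ JPow π 1 (⊤ : Submodule A P) := by
    intro p0
    obtain ⟨g, hg⟩ := hsurj_q (q p0)
    have hmem : p0 - f g ∈ N := (hq_zero _).mp (by rw [map_sub, hg, sub_self])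
    have : p0 = f g + (p0 - f g) := by abel
    rw [this]
    exact Submodule.add_mem _ (Submodule.mem_sup_left ⟨g, rfl⟩)
      (Submodule.mem_sup_right (hNle hmem))
  have hfsurj : Function.Surjective f := by
    intro p0
    exact JPow.sup_eq_top π hn hnil h1 p0
  -- injectivity of f via flatness
  have hKle : LinearMap.ker f ≤ JPow π 1 (LinearMap.ker f) := by
    intro g hg
    rw [LinearMap.mem_ker] at hg
    have hcoord : ∀ i, π (g i) = 0 := hker g (by rw [hg, map_zero])
    set s := g.support with hs
    let eqv := s.equivFin
    let c : Fin s.card → hQ.ChooseBasisIndex := fun j => (eqv.symm j : hQ.ChooseBasisIndex)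
    have hrel : (∑ j, g (c j) • p (c j)) = 0 := by
      have h2 : (∑ j, g (c j) • p (c j)) = ∑ i ∈ s, g i • p i := by
        rw [← Finset.sum_coe_sort s (fun i => g i • p i)]
        exact Equiv.sum_comp eqv.symm (fun (x : s) => g x • p x)
      have h3 : f g = ∑ i ∈ s, g i • p i := by
        rw [Finsupp.linearCombination_apply]; rfl
      rw [h2, ← h3, hg]
    obtain ⟨m, bm, y, hxy, hb0⟩ := hflat s.card (fun j => g (c j)) (fun j => p (c j)) hrel
    have hw : ∀ j, ∃ wj, f wj = y j := fun j => hfsurj (y j)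
    choose w hw using hw
    let k : Fin s.card → (hQ.ChooseBasisIndex →₀ A) :=
      fun j0 => Finsupp.single (c j0) 1 - ∑ j, bm j0 j • w j
    have hk : ∀ j0, f (k j0) = 0 := by
      intro j0
      have : f (Finsupp.single (c j0) 1) = p (c j0) := by
        simp [f, Finsupp.linearCombination_single]
      simp only [k, map_sub, map_sum, map_smul, this, hw]
      rw [sub_eq_zero]
      exact hxy j0
    have hgk : g = ∑ j0, g (c j0) • k j0 := by
      have exp1 : (∑ j0, g (c j0) • Finsupp.single (c j0) 1) = g := by
        have h2 : (∑ j0, g (c j0) • Finsupp.single (c j0) (1:A))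
            = ∑ i ∈ s, Finsupp.single i (g i) := by
          rw [← Finset.sum_coe_sort s (fun i => Finsupp.single i (g i))]
          rw [← Equiv.sum_comp eqv.symm (fun (x : s) => Finsupp.single (x : hQ.ChooseBasisIndex) (g x))]
          exact Finset.sum_congr rfl fun j _ => by rw [Finsupp.smul_single' (g (c j)) (c j) 1, mul_one]
        rw [h2]; exact Finsupp.sum_single g
      calc g = (∑ j0, g (c j0) • Finsupp.single (c j0) 1)
            - ∑ j, (∑ j0, g (c j0) * bm j0 j) • w j := by
              rw [exp1]
              have : ∀ j, (∑ j0, g (c j0) * bm j0 j) • w j = 0 := fun j => by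
                rw [hb0 j, zero_smul]
              simp [this]
        _ = ∑ j0, g (c j0) • k j0 := by
              simp only [k, smul_sub, Finset.smul_sum, Finset.sum_sub_distrib, smul_smul]
              congr 1
              rw [Finset.sum_comm]
              exact Finset.sum_congr rfl fun j _ => by rw [Finset.sum_smul]
    rw [hgk]
    refine Submodule.sum_mem _ fun j0 _ => ?_
    exact Submodule.subset_span ⟨[g (c j0)], rfl, by simpa using hcoord (c j0),
      k j0, LinearMap.mem_ker.mpr (hk j0), by simp⟩
  have hKbot : LinearMap.ker f = ⊥ := JPow.eq_bot_of_le_one π hn hnil hKle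
  have hfinj : Function.Injective f := LinearMap.ker_eq_bot.mp hKbot
  exact Module.Free.of_equiv (LinearEquiv.ofBijective f ⟨hfinj, hfsurj⟩)

end FreeMain

/-- Let `A` be an associative ring and `J ⊆ A` a two-sided ideal with
`Jⁿ = 0` for some `n ≥ 1`; we realize `A/J` as the codomain `B` of a surjective ring
homomorphism `π : A →+* B` with kernel `J`, nilpotency being expressed by vanishing of all
length-`n` products of elements of `J`. Let `P` be a flat left `A`-module such that
`P/JP` is a projective left `A/J`-module (the `B`-module `Q`, identified with the quotient
`P ⧸ JP` by an additive isomorphism `e` compatible with the scalar actions via `π`). Then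
`P` is a projective `A`-module; moreover, if `P/JP` is free over `A/J`, then `P` is free
over `A`. -/
theorem projective_of_flat_of_projective_mod_nilpotent_ideal
    (A B : Type) [Ring A] [Ring B] (π : A →+* B) (hπ : Function.Surjective π)
    (n : ℕ) (hn : 1 ≤ n)
    (hnil : ∀ l : List A, l.length = n → (∀ x ∈ l, π x = 0) → l.prod = 0)
    (P : Type) [AddCommGroup P] [Module A P] (hflat : IsFlatLeftModule A P)
    (N : Submodule A P)
    (hN : N = Submodule.span A { z : P | ∃ a : A, ∃ p : P, π a = 0 ∧ z = a • p })
    (Q : Type) [AddCommGroup Q] [Module B Q]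
    (e : (P ⧸ N) ≃+ Q) (he : ∀ (a : A) (x : P ⧸ N), e (a • x) = π a • e x) :
    (Module.Projective B Q → Module.Projective A P) ∧
      (Module.Free B Q → Module.Free A P) := by
  constructor
  · intro hproj
    obtain ⟨N', e', hN', he'⟩ := transfer A B π P Q hπ N hN e he (ℕ × Q)
    have hfree' : Module.Free A (P × ((ℕ × Q) →₀ A)) :=
      free_main A B π (P × ((ℕ × Q) →₀ A)) (Q × ((ℕ × Q) →₀ B)) hπ n hn hnil
        (flat_prod P ((ℕ × Q) →₀ A) hflat (flat_finsupp (ℕ × Q))) N' hN' e' he'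
        (swindle Q hproj)
    haveI := hfree'
    exact Module.Projective.of_split (LinearMap.inl A P ((ℕ × Q) →₀ A))
      (LinearMap.fst A P ((ℕ × Q) →₀ A)) (by ext x; rfl)
  · intro hfree
    exact free_main A B π P Q hπ n hn hnil hflat N hN e he hfree
end

section
/- Let A be an associative ring, F a left A-module, and C₁ ← C₂ ← C₃ ← ⋯ a projective system of left A-modules such that the induced maps Hom_A(F, Cₙ₊₁) → Hom_A(F, Cₙ) are surjective and Ext¹_A(F, Cₙ) = 0 for all n ≥ 1. Then Ext¹_A(F, lim_{n} Cₙ) = 0. -/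
open CategoryTheory Opposite Limits

lemma ext1_subsingleton_iff {A : Type} [Ring A] {X : ModuleCat A}
    (P : ProjectiveResolution X) (M : ModuleCat A) :
    Subsingleton (((Ext ℤ (ModuleCat A) 1).obj (op X)).obj M) ↔
      ∀ φ : P.complex.X 1 ⟶ M, P.complex.d 2 1 ≫ φ = 0 →
        ∃ ψ : P.complex.X 0 ⟶ M, P.complex.d 1 0 ≫ ψ = φ := by
  set K := P.complex.linearYonedaObj ℤ M with hK
  have e := P.isoExt (R := ℤ) 1 M
  have h1 : Subsingleton (((Ext ℤ (ModuleCat A) 1).obj (op X)).obj M) ↔ IsZero (K.homology 1) := by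
    constructor
    · intro h
      exact (ModuleCat.isZero_of_subsingleton _).of_iso e.symm
    · intro h
      have h' : IsZero (((Ext ℤ (ModuleCat A) 1).obj (op X)).obj M) := h.of_iso e
      refine ⟨fun a b => ?_⟩
      have hid : 𝟙 (((Ext ℤ (ModuleCat A) 1).obj (op X)).obj M) = 0 := h'.eq_of_src _ _
      have ha := ConcreteCategory.congr_hom hid a
      have hb := ConcreteCategory.congr_hom hid b
      simp only [ModuleCat.id_apply] at ha hb
      rw [ha, hb]
      rfl
  rw [h1, ← HomologicalComplex.exactAt_iff_isZero_homology,
    K.exactAt_iff' 0 1 2 (by simp) (by simp),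
    ShortComplex.moduleCat_exact_iff]
  constructor
  · intro h φ hφ
    obtain ⟨ψ, hψ⟩ := h φ hφ
    exact ⟨ψ, hψ⟩
  · intro h φ hφ
    obtain ⟨ψ, hψ⟩ := h φ hφ
    exact ⟨ψ, hψ⟩


/-- The inverse limit `lim_n Cₙ` of a tower `C₁ ← C₂ ← C₃ ← ⋯` of left `A`-modules,
realized as the submodule of compatible sequences in `Π n, Cₙ`. -/
def invLimit (A : Type) [Ring A] (C : ℕ → Type) [∀ n, AddCommGroup (C n)]
    [∀ n, Module A (C n)] (f : ∀ n, C (n + 1) →ₗ[A] C n) :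
    Submodule A (∀ n, C n) where
  carrier := { x | ∀ n, f n (x (n + 1)) = x n }
  add_mem' := by
    intro a b ha hb n
    simp [ha n, hb n]
  zero_mem' := by
    intro n
    simp
  smul_mem' := by
    intro c a ha n
    simp [ha n]

/-- the dual Eklof lemma. Let `A` be an associative ring, `F` a left
`A`-module, and `C₁ ← C₂ ← ⋯` an inverse system of left `A`-modules such that all the maps
`Hom_A(F, Cₙ₊₁) → Hom_A(F, Cₙ)` are surjective and `Ext¹_A(F, Cₙ) = 0` for all `n`.
Then `Ext¹_A(F, lim_n Cₙ) = 0`. -/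
theorem ext1_vanishes_of_inverse_limit
    (A : Type) [Ring A] (F : Type) [AddCommGroup F] [Module A F]
    (C : ℕ → Type) [∀ n, AddCommGroup (C n)] [∀ n, Module A (C n)]
    (f : ∀ n, C (n + 1) →ₗ[A] C n)
    (hsurj : ∀ n, Function.Surjective
      (fun g : F →ₗ[A] C (n + 1) => (f n).comp g))
    (hext : ∀ n, Subsingleton (((Ext ℤ (ModuleCat A) 1).obj
      (op (ModuleCat.of A F))).obj (ModuleCat.of A (C n)))) :
    Subsingleton (((Ext ℤ (ModuleCat A) 1).obj
      (op (ModuleCat.of A F))).obj (ModuleCat.of A (invLimit A C f))) := by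
  obtain ⟨P⟩ := (HasProjectiveResolution.out :
    Nonempty (ProjectiveResolution (ModuleCat.of A F)))
  rw [ext1_subsingleton_iff P]
  intro φ hφ
  -- projections
  let π : ∀ n, ModuleCat.of A (invLimit A C f) ⟶ ModuleCat.of A (C n) := fun n => ModuleCat.ofHom
    { toFun := fun x => x.1 n
      map_add' := fun _ _ => rfl
      map_smul' := fun _ _ => rfl }
  let Fm : ∀ n, ModuleCat.of A (C (n + 1)) ⟶ ModuleCat.of A (C n) := fun n => ModuleCat.ofHom (f n)
  have hπ : ∀ n, π (n + 1) ≫ Fm n = π n := fun n => ModuleCat.hom_ext (LinearMap.ext fun x => x.2 n)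
  -- lift each component using Ext¹(F, Cₙ) = 0
  have hextC := fun n => (ext1_subsingleton_iff P (ModuleCat.of A (C n))).mp (hext n)
  choose ψ hψ using fun n => hextC n (φ ≫ π n)
    (by rw [← Category.assoc, hφ, Limits.zero_comp])
  -- the discrepancies factor through F
  have hα : ∀ n, P.complex.d 1 0 ≫ (ψ (n + 1) ≫ Fm n - ψ n) = 0 := fun n => by
    rw [Preadditive.comp_sub, ← Category.assoc, hψ, hψ, Category.assoc, hπ, sub_self]
  let hdesc := fun n => CokernelCofork.IsColimit.desc' P.isColimitCokernelCofork
    (ψ (n + 1) ≫ Fm n - ψ n) (hα n)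
  let h : ∀ n, ModuleCat.of A F ⟶ ModuleCat.of A (C n) := fun n => (hdesc n).1
  have hh : ∀ n, P.π.f 0 ≫ h n = ψ (n + 1) ≫ Fm n - ψ n := fun n => by
    exact (hdesc n).2
  -- the correcting maps, chosen recursively using hsurj
  let k : ∀ n, (ModuleCat.of A F ⟶ ModuleCat.of A (C n)) := fun n =>
    ModuleCat.ofHom (Nat.rec (motive := fun n => F →ₗ[A] C n) 0 (fun n kn => (hsurj n (kn - (h n).hom)).choose) n)
  have hk : ∀ n, k (n + 1) ≫ Fm n = k n - h n := fun n =>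
    ModuleCat.hom_ext (hsurj n (k n - h n).hom).choose_spec
  -- corrected lifts
  let ψ' : ∀ n, P.complex.X 0 ⟶ ModuleCat.of A (C n) := fun n => ψ n + P.π.f 0 ≫ k n
  have hcomp : ∀ n, ψ' (n + 1) ≫ Fm n = ψ' n := fun n => by
    show (ψ (n + 1) + P.π.f 0 ≫ k (n + 1)) ≫ Fm n = ψ n + P.π.f 0 ≫ k n
    erw [Preadditive.add_comp, Category.assoc, hk n, Preadditive.comp_sub]
    have := hh n
    have h2 : ψ (n + 1) ≫ Fm n = ψ n + P.π.f 0 ≫ h n := by rw [this]; abel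
    rw [h2]
    abel
  have hres : ∀ n, P.complex.d 1 0 ≫ ψ' n = φ ≫ π n := fun n => by
    show P.complex.d 1 0 ≫ (ψ n + P.π.f 0 ≫ k n) = φ ≫ π n
    erw [Preadditive.comp_add, hψ n, ← Category.assoc, P.complex_d_comp_π_f_zero,
      Limits.zero_comp, add_zero]
  -- assemble the lift into the inverse limit
  refine ⟨ModuleCat.ofHom
          { toFun := fun x => ⟨fun n => ψ' n x, fun n => ?_⟩
            map_add' := fun x y => ?_
            map_smul' := fun c x => ?_ }, ?_⟩
  · exact ConcreteCategory.congr_hom (hcomp n) x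
  · exact Subtype.ext (funext fun n => map_add (ψ' n).hom x y)
  · exact Subtype.ext (funext fun n => map_smul (ψ' n).hom c x)
  · refine ModuleCat.hom_ext (LinearMap.ext fun x => Subtype.ext (funext fun n => ?_))
    exact ConcreteCategory.congr_hom (hres n) x
end
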